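/- arXiv:0908.3307 — 3 statements merged into one kernel-verified Lean document; each statement's English description precedes it below -/
import Mathlib

section
/- Let D be a complete normed division ring of characteristic 0 such that the norm restricted to the rational numbers is the usual absolute value, i.e. ‖(q : D)‖ = |q| for every rational q. Then there exists a ring homomorphism ρ : ℝ → D such that ‖ρ(r)‖ = |r| for every real number r, and ρ(r)·d = d·ρ(r) for every r ∈ ℝ and every d ∈ D; i.e. D contains an isometric copy of the real field inside its center. -/
/-- A complete normed division ring of characteristic 0, whose norm restricts
to the usual absolute value on the rationals, contains an isometric copy of
the real field inside its center. -/
theorem complete_division_ring_contains_reals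
    {D : Type*} [NormedDivisionRing D] [CompleteSpace D] [CharZero D]
    (hq : ∀ q : ℚ, ‖(q : D)‖ = |(q : ℝ)|) :
    ∃ ρ : ℝ →+* D, (∀ r : ℝ, ‖ρ r‖ = |r|) ∧
      ∀ (r : ℝ) (d : D), ρ r * d = d * ρ r := by
  have hiso : Isometry ((Rat.castHom D : ℚ →+* D) : ℚ → D) := by
    intro a b
    show edist ((a:ℚ):D) ((b:ℚ):D) = edist a b
    rw [edist_dist, edist_dist, dist_eq_norm, ← Rat.cast_sub, hq, Rat.dist_eq]
    norm_cast
  have ue : IsUniformInducing ((Rat.castHom ℝ : ℚ →+* ℝ) : ℚ → ℝ) :=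
    Rat.isUniformEmbedding_coe_real.toIsUniformInducing
  have dr : DenseRange ((Rat.castHom ℝ : ℚ →+* ℝ) : ℚ → ℝ) :=
    Rat.isDenseEmbedding_coe_real.dense
  have hf : UniformContinuous ((Rat.castHom D : ℚ →+* D) : ℚ → D) :=
    hiso.uniformContinuous
  let ρ : ℝ →+* D := IsDenseInducing.extendRingHom ue dr hf
  have hcont : Continuous ρ :=
    (uniformContinuous_uniformly_extend ue dr hf).continuous
  have hext : ∀ q : ℚ, ρ (q : ℝ) = (q : D) := fun q =>
    IsDenseInducing.extend_eq (ue.isDenseInducing dr) hf.continuous q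
  refine ⟨ρ, ?_, ?_⟩
  · intro r
    refine dr.induction_on r (isClosed_eq (hcont.norm) continuous_abs) fun q => ?_
    show ‖ρ (q:ℝ)‖ = |((q:ℝ):ℝ)|
    rw [hext, hq]
  · intro r d
    refine dr.induction_on r
      (isClosed_eq (hcont.mul continuous_const) (continuous_const.mul hcont)) fun q => ?_
    show ρ (q:ℝ) * d = d * ρ (q:ℝ)
    rw [hext]; exact (Rat.cast_commute q d).eq
end

section
/- Let A be a normed algebra over ℝ, let n ≥ 1, and let a₀, a₁, …, aₙ ∈ A. Define the monomial function pₙ : A → A by pₙ(x) = a₀·x·a₁·x·⋯·x·aₙ (containing n factors of x, multiplied in this order). Then for every x, h ∈ A, the n-th iterated Fréchet derivative of pₙ at x evaluated at the constant tuple of directions (h, …, h) equals n!·pₙ(h), i.e. D^n pₙ(x)(h, …, h) = n!·(a₀·h·a₁·h·⋯·h·aₙ). -/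
/-- The monomial `pₙ(x) = a₀·x·a₁·x·⋯·x·aₙ` with `n` factors of `x`. -/
def monomial {A : Type*} [Ring A] (a : ℕ → A) : ℕ → A → A
  | 0, _ => a 0
  | n + 1, x => monomial a n x * x * a (n + 1)

lemma monomial_eq_list_prod {A : Type*} [Ring A] (a : ℕ → A) (n : ℕ) (x : A) :
    monomial a n x = a 0 * (List.ofFn fun i : Fin n => x * a (i + 1)).prod := by
  induction n with
  | zero => simp [monomial]
  | succ n ih =>
    rw [monomial, ih, List.ofFn_succ', List.prod_concat]
    simp [mul_assoc, Fin.last]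

/-- The continuous multilinear map `v ↦ a₀ · v₀ · a₁ · v₁ ⋯ v_{n-1} · aₙ`. -/
noncomputable def monomialCM {A : Type*} [NormedRing A] [NormedAlgebra ℝ A]
    (a : ℕ → A) (n : ℕ) : ContinuousMultilinearMap ℝ (fun _ : Fin n => A) A :=
  (ContinuousLinearMap.mul ℝ A (a 0)).compContinuousMultilinearMap
    ((ContinuousMultilinearMap.mkPiAlgebraFin ℝ n A).compContinuousLinearMap
      (fun i => (ContinuousLinearMap.mul ℝ A).flip (a (i + 1))))

lemma monomialCM_apply {A : Type*} [NormedRing A] [NormedAlgebra ℝ A]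
    (a : ℕ → A) (n : ℕ) (v : Fin n → A) :
    monomialCM a n v = a 0 * (List.ofFn fun i : Fin n => v i * a (i + 1)).prod := by
  simp [monomialCM]

lemma monomialCM_diag {A : Type*} [NormedRing A] [NormedAlgebra ℝ A]
    (a : ℕ → A) (n : ℕ) (x : A) :
    monomialCM a n (fun _ => x) = monomial a n x := by
  rw [monomialCM_apply, monomial_eq_list_prod]

set_option maxHeartbeats 1000000 in
/-- The `n`-th iterated Fréchet derivative of the degree-`n` monomial `pₙ`,
evaluated at the constant tuple `(h, …, h)`, equals `n! · pₙ(h)`. -/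
theorem iteratedFDeriv_monomial_diagonal
    {A : Type*} [NormedRing A] [NormedAlgebra ℝ A]
    (n : ℕ) (hn : 1 ≤ n) (a : ℕ → A) (x h : A) :
    iteratedFDeriv ℝ n (monomial a n) x (fun _ : Fin n => h)
      = n.factorial • monomial a n h := by
  classical
  let g : A →L[ℝ] (Fin n → A) :=
    ContinuousLinearMap.pi (fun _ : Fin n => ContinuousLinearMap.id ℝ A)
  have hfun : monomial a n = (⇑(monomialCM a n)) ∘ ⇑g := by
    funext y
    exact ((monomialCM_diag a n y)).symm
  have key : iteratedFDeriv ℝ n (monomial a n) x =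
      ((monomialCM a n).iteratedFDeriv n (g x)).compContinuousLinearMap (fun _ => g) := by
    rw [hfun, g.iteratedFDeriv_comp_right ((monomialCM a n).contDiff (n := (⊤ : ℕ∞))) x (by exact_mod_cast le_top),
      (monomialCM a n).iteratedFDeriv_eq]
  rw [key, ContinuousMultilinearMap.compContinuousLinearMap_apply,
    ContinuousMultilinearMap.iteratedFDeriv, ContinuousMultilinearMap.sum_apply]
  simp only [ContinuousMultilinearMap.iteratedFDerivComponent_apply]
  have card_eq : (Finset.univ : Finset (Fin n ↪ Fin n)).card = n.factorial := by
    rw [Finset.card_univ, Fintype.card_embedding_eq, Fintype.card_fin, Nat.descFactorial_self]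
  rw [Finset.sum_eq_card_nsmul (b := monomial a n h) ?_, card_eq]
  intro e _
  have hsurj : Function.Surjective e := Finite.surjective_of_injective e.injective
  rw [← monomialCM_diag a n h]
  congr 1 with j
  have hj : j ∈ Set.range ⇑e := hsurj j
  rw [dif_pos hj]
  simp [g]
end

section
/- There is no differentiable function f : ℍ → ℍ on the real quaternions such that the Fréchet derivative of f satisfies Df(x)(h) = 3·h·x² for all x, h ∈ ℍ. (Such a derivative prescription is inconsistent because the resulting second derivative would fail to be symmetric.) -/
open ContinuousLinearMap Quaternion

noncomputable def L : Quaternion ℝ →L[ℝ] (Quaternion ℝ →L[ℝ] Quaternion ℝ) :=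
  (3 : ℝ) • (ContinuousLinearMap.mul ℝ (Quaternion ℝ)).flip

/-- There is no differentiable function on the quaternions whose Fréchet
derivative is `h ↦ 3·h·x²` at every point `x`. -/
theorem no_function_with_derivative_three_h_x_sq :
    ¬ ∃ f : Quaternion ℝ → Quaternion ℝ, Differentiable ℝ f ∧
        ∀ x h : Quaternion ℝ, fderiv ℝ f x h = 3 * h * x ^ 2 := by
  rintro ⟨f, hdiff, hD⟩
  have hf' : ∀ y : Quaternion ℝ, HasFDerivAt f (L (y ^ 2)) y := by
    intro y
    have h1 := (hdiff y).hasFDerivAt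
    have : fderiv ℝ f y = L (y ^ 2) := by
      refine ContinuousLinearMap.ext fun h => ?_
      simp only [L, ContinuousLinearMap.smul_apply, ContinuousLinearMap.flip_apply,
        ContinuousLinearMap.mul_apply']
      rw [hD y h, Algebra.smul_def, ← mul_assoc]
      norm_cast
    rwa [this] at h1
  -- derivative of y ↦ y^2 at i
  set i : Quaternion ℝ := ⟨0, 1, 0, 0⟩
  set j : Quaternion ℝ := ⟨0, 0, 1, 0⟩
  have hsq : HasFDerivAt (fun y : Quaternion ℝ => y ^ 2)
      (i • (ContinuousLinearMap.id ℝ (Quaternion ℝ)) +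
        (ContinuousLinearMap.id ℝ (Quaternion ℝ)).smulRight i) i := by
    have h := HasFDerivAt.mul' (𝕜 := ℝ) (hasFDerivAt_id i) (hasFDerivAt_id i)
    have e : (ContinuousLinearMap.id ℝ (Quaternion ℝ)).smulRight i =
        MulOpposite.op i • ContinuousLinearMap.id ℝ (Quaternion ℝ) := by
      ext x : 1; simp
    rw [e]
    simp only [sq]
    exact h
  have hf'' : HasFDerivAt (fun y => L (y ^ 2))
      (L.comp (i • (ContinuousLinearMap.id ℝ (Quaternion ℝ)) +
        (ContinuousLinearMap.id ℝ (Quaternion ℝ)).smulRight i)) i :=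
    HasFDerivAt.comp (g := ⇑L) i L.hasFDerivAt hsq
  have hsym := second_derivative_symmetric hf' hf'' i j
  simp only [ContinuousLinearMap.comp_apply, ContinuousLinearMap.add_apply,
    ContinuousLinearMap.coe_smul', Pi.smul_apply, ContinuousLinearMap.coe_id', id_eq,
    ContinuousLinearMap.smulRight_apply, L, ContinuousLinearMap.smul_apply,
    ContinuousLinearMap.flip_apply, ContinuousLinearMap.mul_apply'] at hsym
  rw [Quaternion.ext_iff] at hsym
  have h3 := hsym.2.2.1
  change ((3:ℝ) • (j * (i * i + i * i))).imJ = ((3:ℝ) • (i * (i * j + j * i))).imJ at h3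
  have k : ((3:ℝ) • ((⟨0, 0, 1, 0⟩ : Quaternion ℝ) * ((⟨0, 1, 0, 0⟩ : Quaternion ℝ) *
      (⟨0, 1, 0, 0⟩ : Quaternion ℝ) + (⟨0, 1, 0, 0⟩ : Quaternion ℝ) *
      (⟨0, 1, 0, 0⟩ : Quaternion ℝ)))).imJ ≠ ((3:ℝ) • ((⟨0, 1, 0, 0⟩ : Quaternion ℝ) *
      ((⟨0, 1, 0, 0⟩ : Quaternion ℝ) * (⟨0, 0, 1, 0⟩ : Quaternion ℝ) +
      (⟨0, 0, 1, 0⟩ : Quaternion ℝ) * (⟨0, 1, 0, 0⟩ : Quaternion ℝ)))).imJ := by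
    norm_num
  exact k h3
end
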